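/- Let H and G be graphs with edges colored by {1,…,k}, let h ≥ 0 be an integer, let φ: V(H) → V(G) be a homomorphism, and let G' be an h-th augmentation of G. Then there exists a directed graph H' obtained from an h-th augmentation of H by recoloring zeros such that for every edge (u,v) ∈ E(H'): if φ(u) ≠ φ(v), then (φ(u),φ(v)) ∈ E(G') and the edge (u,v) has the same color as (φ(u),φ(v)); and if φ(u) = φ(v), then the color of (u,v) is 0. -/

import Mathlib

/-- A graph on vertex type `V` with edges colored by colors `{1, …, k}`
(represented by `Fin k`): `col u v = some c` means `uv` is an edge of color `c`. -/
structure EColGraph (V : Type) (k : ℕ) where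
  col : V → V → Option (Fin k)
  symm : ∀ u v, col u v = col v u
  irrefl : ∀ v, col v v = none

/-- A directed graph with edges colored by colors `{0, 1, …, k}` (represented by
`Fin (k+1)`, the color `i` of an original edge being represented by `Fin.succ`
and the new color `0` by `0`): edges join distinct vertices and no pair of vertices
is joined in both directions. -/
structure CDigraph (V : Type) (k : ℕ) where
  col : V → V → Option (Fin (k + 1))
  irrefl : ∀ v, col v v = none
  asym : ∀ u v, (col u v).isSome → col v u = none

/-- Two distinct non-adjacent vertices `u`, `v` of a colored directed graph (given by
its coloring function `f`) form a fork if there is `w` with edges `(u,w)`, `(v,w)`. -/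
def QFork {A : Type} {k : ℕ} (f : A → A → Option (Fin (k + 1))) (u v : A) : Prop :=
  u ≠ v ∧ f u v = none ∧ f v u = none ∧ ∃ w, (f u w).isSome ∧ (f v w).isSome

/-- `D` is an orientation of the edge-colored graph `G`; each edge keeps its color
(color `c` of `G` is represented by `Fin.succ c` in `D`). -/
def IsOrientation {V : Type} {k : ℕ} (G : EColGraph V k) (D : CDigraph V k) : Prop :=
  (∀ u v c, D.col u v = some c → ∃ c' : Fin k, c = Fin.succ c' ∧ G.col u v = some c') ∧
  (∀ u v (c : Fin k), G.col u v = some c →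
    D.col u v = some (Fin.succ c) ∨ D.col v u = some (Fin.succ c))

/-- `D'` is a fraternal augmentation of `D`: for every fork `u,v` of `D`, exactly one
of the edges `(u,v)`, `(v,u)` is added with the new color `0`, and no other edges are
added or changed. -/
def IsFraternalAug {V : Type} {k : ℕ} (D D' : CDigraph V k) : Prop :=
  (∀ u v c, D.col u v = some c → D'.col u v = some c) ∧
  (∀ u v, QFork D.col u v → D'.col u v = some 0 ∨ D'.col v u = some 0) ∧
  (∀ u v c, D'.col u v = some c →
    D.col u v = some c ∨ ((QFork D.col u v ∨ QFork D.col v u) ∧ c = 0))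

/-- `IsAug G h D`: `D` is an `h`-th augmentation of `G`, i.e. it is obtained from an
orientation of `G` by iterating fraternal augmentation `h` times. -/
def IsAug {V : Type} {k : ℕ} (G : EColGraph V k) : ℕ → CDigraph V k → Prop
  | 0, D => IsOrientation G D
  | n + 1, D => ∃ D', IsAug G n D' ∧ IsFraternalAug D' D

/-- `D'` is obtained from `D` by recoloring zeros: they differ only in the colors of
edges whose color in `D` is `0`. -/
def RecolorZeros {V : Type} {k : ℕ} (D D' : CDigraph V k) : Prop :=
  ∀ u v, D'.col u v = D.col u v ∨ (D.col u v = some 0 ∧ (D'.col u v).isSome)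

/-- A homomorphism of edge-colored (undirected) graphs. -/
def IsHom {V W : Type} {k : ℕ} (H : EColGraph V k) (G : EColGraph W k)
    (φ : V → W) : Prop :=
  ∀ u v c, H.col u v = some c → G.col (φ u) (φ v) = some c

/-- Invariant carried along the induction: every edge of the augmentation `D` of `H`
either contracts under `φ` (and then has color `0`), or maps to an edge of the
corresponding augmentation `Gd` of `G`, with the same color unless its color is `0`. -/
def HLInv {V W : Type} {k : ℕ} (φ : V → W) (D : CDigraph V k) (Gd : CDigraph W k) : Prop :=
  ∀ u v c, D.col u v = some c →
    (φ u = φ v ∧ c = 0) ∨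
    (φ u ≠ φ v ∧ (Gd.col (φ u) (φ v) = some c ∨ (c = 0 ∧ (Gd.col (φ u) (φ v)).isSome)))

lemma HL_qfork_symm {A : Type} {k : ℕ} {f : A → A → Option (Fin (k + 1))} {u v : A}
    (h : QFork f u v) : QFork f v u := by
  obtain ⟨hne, h1, h2, w, hw1, hw2⟩ := h
  exact ⟨hne.symm, h2, h1, w, hw2, hw1⟩

lemma HL_fa_mono {W : Type} {k : ℕ} {D D' : CDigraph W k} (h : IsFraternalAug D D')
    {u v : W} (hs : (D.col u v).isSome) : (D'.col u v).isSome := by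
  obtain ⟨c, hc⟩ := Option.isSome_iff_exists.mp hs
  rw [h.1 u v c hc]; rfl

lemma HL_fork_image {V W : Type} {k : ℕ} (φ : V → W) {D : CDigraph V k}
    {Gd Gd' : CDigraph W k} (hInv : HLInv φ D Gd) (hfa : IsFraternalAug Gd Gd')
    {u v : V} (hq : QFork D.col u v) (hne : φ u ≠ φ v) :
    (Gd'.col (φ u) (φ v)).isSome ∨ (Gd'.col (φ v) (φ u)).isSome := by
  obtain ⟨huv, h1, h2, w, hw1, hw2⟩ := hq
  obtain ⟨a, ha⟩ := Option.isSome_iff_exists.mp hw1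
  obtain ⟨b, hb⟩ := Option.isSome_iff_exists.mp hw2
  have Hu := hInv u w a ha
  have Hv := hInv v w b hb
  have hsomeu : φ u ≠ φ w → (Gd.col (φ u) (φ w)).isSome := by
    intro hne'
    rcases Hu with ⟨he, _⟩ | ⟨_, hcase⟩
    · exact absurd he hne'
    · rcases hcase with hc | ⟨_, hs⟩
      · rw [hc]; rfl
      · exact hs
  have hsomev : φ v ≠ φ w → (Gd.col (φ v) (φ w)).isSome := by
    intro hne'
    rcases Hv with ⟨he, _⟩ | ⟨_, hcase⟩
    · exact absurd he hne'
    · rcases hcase with hc | ⟨_, hs⟩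
      · rw [hc]; rfl
      · exact hs
  by_cases hwu : φ w = φ u
  · right
    have : (Gd.col (φ v) (φ u)).isSome := by
      have := hsomev (by rw [hwu]; exact fun e => hne e.symm)
      rwa [hwu] at this
    exact HL_fa_mono hfa this
  · by_cases hwv : φ w = φ v
    · left
      have : (Gd.col (φ u) (φ v)).isSome := by
        have := hsomeu (by rw [hwv]; exact hne)
        rwa [hwv] at this
      exact HL_fa_mono hfa this
    · have hsu := hsomeu (fun e => hwu e.symm)
      have hsv := hsomev (fun e => hwv e.symm)
      by_cases hA : (Gd.col (φ u) (φ v)).isSome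
      · exact Or.inl (HL_fa_mono hfa hA)
      · by_cases hB : (Gd.col (φ v) (φ u)).isSome
        · exact Or.inr (HL_fa_mono hfa hB)
        · have hq' : QFork Gd.col (φ u) (φ v) :=
            ⟨hne, Option.not_isSome_iff_eq_none.mp hA,
              Option.not_isSome_iff_eq_none.mp hB, φ w, hsu, hsv⟩
          rcases hfa.2.1 _ _ hq' with hc | hc
          · exact Or.inl (by rw [hc]; rfl)
          · exact Or.inr (by rw [hc]; rfl)

/-- Pulling back one fraternal augmentation along `φ`. -/
lemma HL_step {V W : Type} {k : ℕ} (φ : V → W) (r : V → V → Prop)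
    (rtot : ∀ u v : V, u ≠ v → r u v ∨ r v u)
    (rasym : ∀ u v : V, r u v → r v u → False)
    (D : CDigraph V k) (Gd Gd' : CDigraph W k)
    (hInv : HLInv φ D Gd) (hfa : IsFraternalAug Gd Gd') :
    ∃ D' : CDigraph V k, IsFraternalAug D D' ∧ HLInv φ D' Gd' := by
  classical
  set Pick : V → V → Prop := fun u v =>
    (φ u ≠ φ v ∧ (Gd'.col (φ u) (φ v)).isSome) ∨ (φ u = φ v ∧ r u v) with hPickDef
  have pickasym : ∀ u v, Pick u v → Pick v u → False := by
    intro u v h1 h2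
    rcases h1 with ⟨hne, hs⟩ | ⟨he, hr⟩
    · rcases h2 with ⟨_, hs'⟩ | ⟨he', _⟩
      · rw [Gd'.asym _ _ hs] at hs'; exact (Bool.false_ne_true (by simp at hs'))
      · exact hne he'.symm
    · rcases h2 with ⟨hne', _⟩ | ⟨_, hr'⟩
      · exact hne' he.symm
      · exact rasym u v hr hr'
  have picktot : ∀ u v, QFork D.col u v → Pick u v ∨ Pick v u := by
    intro u v hq
    by_cases hne : φ u = φ v
    · rcases rtot u v hq.1 with hr | hr
      · exact Or.inl (Or.inr ⟨hne, hr⟩)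
      · exact Or.inr (Or.inr ⟨hne.symm, hr⟩)
    · rcases HL_fork_image φ hInv hfa hq hne with hs | hs
      · exact Or.inl (Or.inl ⟨hne, hs⟩)
      · exact Or.inr (Or.inl ⟨fun e => hne e.symm, hs⟩)
  set f : V → V → Option (Fin (k + 1)) := fun u v =>
    if (D.col u v).isSome then D.col u v
    else if QFork D.col u v ∧ Pick u v then some 0 else none with hfDef
  have hf_old : ∀ u v c, D.col u v = some c → f u v = some c := by
    intro u v c hc
    simp only [hfDef, hc]
    rfl
  have hf_some : ∀ u v c, f u v = some c →
      D.col u v = some c ∨ (D.col u v = none ∧ QFork D.col u v ∧ Pick u v ∧ c = 0) := by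
    intro u v c hc
    simp only [hfDef] at hc
    by_cases hD : (D.col u v).isSome
    · rw [if_pos hD] at hc; exact Or.inl hc
    · rw [if_neg hD] at hc
      by_cases hQ : QFork D.col u v ∧ Pick u v
      · rw [if_pos hQ] at hc
        exact Or.inr ⟨Option.not_isSome_iff_eq_none.mp hD, hQ.1, hQ.2,
          (Option.some_injective _ hc.symm)⟩
      · rw [if_neg hQ] at hc; exact absurd hc (by simp)
  have hf_none : ∀ u v, D.col u v = none → ¬ (QFork D.col u v ∧ Pick u v) → f u v = none := by
    intro u v h1 h2
    simp only [hfDef, h1]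
    rw [if_neg (by simp), if_neg h2]
  refine ⟨⟨f, ?_, ?_⟩, ⟨?_, ?_, ?_⟩, ?_⟩
  · intro v
    have : ¬ (QFork D.col v v ∧ Pick v v) := fun h => h.1.1 rfl
    exact hf_none v v (D.irrefl v) this
  · intro u v hs
    obtain ⟨c, hc⟩ := Option.isSome_iff_exists.mp hs
    rcases hf_some u v c hc with hD | ⟨hn, hQ, hP, _⟩
    · apply hf_none
      · exact D.asym u v (by rw [hD]; rfl)
      · intro h
        have h2 := h.1.2.2.1
        rw [hD] at h2
        simp at h2
    · apply hf_none v u hQ.2.2.1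
      intro h
      exact pickasym u v hP h.2
  · exact hf_old
  · intro u v hq
    rcases picktot u v hq with hP | hP
    · left
      simp only [hfDef, hq.2.1]
      rw [if_neg (by simp), if_pos ⟨hq, hP⟩]
    · right
      simp only [hfDef, hq.2.2.1]
      rw [if_neg (by simp), if_pos ⟨HL_qfork_symm hq, hP⟩]
  · intro u v c hc
    rcases hf_some u v c hc with hD | ⟨_, hQ, _, hc0⟩
    · exact Or.inl hD
    · exact Or.inr ⟨Or.inl hQ, hc0⟩
  · intro u v c hc
    rcases hf_some u v c hc with hD | ⟨_, _, hP, hc0⟩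
    · rcases hInv u v c hD with h | ⟨hne, h⟩
      · exact Or.inl h
      · rcases h with h | ⟨h0, hs⟩
        · exact Or.inr ⟨hne, Or.inl (hfa.1 _ _ _ h)⟩
        · exact Or.inr ⟨hne, Or.inr ⟨h0, HL_fa_mono hfa hs⟩⟩
    · rcases hP with ⟨hne, hs⟩ | ⟨he, _⟩
      · exact Or.inr ⟨hne, Or.inr ⟨hc0, hs⟩⟩
      · exact Or.inl ⟨he, hc0⟩

/-- Pulling back the orientation along `φ`. -/
lemma HL_base {V W : Type} {k : ℕ} (φ : V → W) (H : EColGraph V k) (G : EColGraph W k)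
    (hφ : IsHom H G φ) (G0 : CDigraph W k) (hor : IsOrientation G G0) :
    ∃ D : CDigraph V k, IsOrientation H D ∧ HLInv φ D G0 := by
  classical
  set f : V → V → Option (Fin (k + 1)) := fun u v =>
    (H.col u v).bind fun c =>
      if G0.col (φ u) (φ v) = some (Fin.succ c) then some (Fin.succ c) else none
    with hfDef
  have hne : ∀ u v c, H.col u v = some c → φ u ≠ φ v := by
    intro u v c hc he
    have := hφ u v c hc
    rw [he, G.irrefl] at this
    simp at this
  have hf_some : ∀ u v d, f u v = some d →
      ∃ c, H.col u v = some c ∧ d = Fin.succ c ∧ G0.col (φ u) (φ v) = some (Fin.succ c) := by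
    intro u v d hd
    simp only [hfDef] at hd
    cases hH : H.col u v with
    | none => rw [hH] at hd; simp at hd
    | some c =>
      rw [hH, Option.bind_some] at hd
      by_cases hG : G0.col (φ u) (φ v) = some (Fin.succ c)
      · rw [if_pos hG] at hd
        exact ⟨c, rfl, (Option.some_injective _ hd).symm, hG⟩
      · rw [if_neg hG] at hd; simp at hd
  refine ⟨⟨f, ?_, ?_⟩, ⟨?_, ?_⟩, ?_⟩
  · intro v
    simp only [hfDef, H.irrefl, Option.bind_none]
  · intro u v hs
    obtain ⟨d, hd⟩ := Option.isSome_iff_exists.mp hs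
    obtain ⟨c, hH, hdc, hG⟩ := hf_some u v d hd
    have hGnone : G0.col (φ v) (φ u) = none :=
      G0.asym _ _ (by rw [hG]; rfl)
    simp only [hfDef]
    cases hH' : H.col v u with
    | none => rw [Option.bind_none]
    | some c' =>
      rw [Option.bind_some, if_neg]
      rw [hGnone]
      exact fun h => by simp at h
  · intro u v c hc
    obtain ⟨c', hH, hdc, _⟩ := hf_some u v c hc
    exact ⟨c', hdc, hH⟩
  · intro u v c hc
    have hGc : G.col (φ u) (φ v) = some c := hφ u v c hc
    rcases hor.2 _ _ _ hGc with hG | hG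
    · left
      simp only [hfDef, hc, Option.bind_some]
      rw [if_pos hG]
    · right
      have hH' : H.col v u = some c := by rw [← H.symm]; exact hc
      have hGc' : G.col (φ v) (φ u) = some c := hφ v u c hH'
      simp only [hfDef, hH', Option.bind_some]
      rw [if_pos hG]
  · intro u v c hc
    obtain ⟨c', hH, hdc, hG⟩ := hf_some u v c hc
    right
    refine ⟨hne u v c' hH, Or.inl ?_⟩
    rw [hdc]; exact hG

/-- Let `φ : V(H) → V(G)` be a homomorphism of graphs with edges colored by `{1,…,k}`
and let `G'` be an `h`-th augmentation of `G`.  Then there is a graph `H'` obtained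
from an `h`-th augmentation of `H` by recoloring zeros such that for every edge
`(u,v)` of `H'`: if `φ(u) ≠ φ(v)` then `(φ(u),φ(v))` is an edge of `G'` of the same
color, and if `φ(u) = φ(v)` then `(u,v)` has color `0`. -/
theorem hom_lifts_to_augmentation {V W : Type} [Fintype V] [Fintype W] {k : ℕ}
    (H : EColGraph V k) (G : EColGraph W k) (h : ℕ)
    (φ : V → W) (hφ : IsHom H G φ)
    (G' : CDigraph W k) (hG' : IsAug G h G') :
    ∃ H₀ H' : CDigraph V k, IsAug H h H₀ ∧ RecolorZeros H₀ H' ∧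
      ∀ u v c, H'.col u v = some c →
        (φ u ≠ φ v → G'.col (φ u) (φ v) = some c) ∧ (φ u = φ v → c = 0) := by
  classical
  set e := Fintype.equivFin V with heDef
  have key : ∀ (n : ℕ) (Gn : CDigraph W k), IsAug G n Gn →
      ∃ D : CDigraph V k, IsAug H n D ∧ HLInv φ D Gn := by
    intro n
    induction n with
    | zero => intro Gn hGn; exact HL_base φ H G hφ Gn hGn
    | succ n ih =>
      intro Gn hGn
      obtain ⟨Gp, hGp, hfa⟩ := hGn
      obtain ⟨D, hD, hInv⟩ := ih Gp hGp
      obtain ⟨D', hfa', hInv'⟩ := HL_step φ (fun u v => e u < e v)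
        (fun u v huv => lt_or_gt_of_ne (fun hc => huv (e.injective hc)))
        (fun u v h1 h2 => absurd h2 (not_lt_of_gt h1))
        D Gp Gn hInv hfa
      exact ⟨D', ⟨D, hD, hfa'⟩, hInv'⟩
  obtain ⟨D, hD, hInv⟩ := key h G' hG'
  set g : V → V → Option (Fin (k + 1)) := fun u v =>
    (D.col u v).bind fun c =>
      if c = 0 ∧ φ u ≠ φ v then
        (if (G'.col (φ u) (φ v)).isSome then G'.col (φ u) (φ v) else some 0)
      else some c
    with hgDef
  have hg_none : ∀ u v, D.col u v = none → g u v = none := by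
    intro u v h0; simp only [hgDef, h0, Option.bind_none]
  have hg_some : ∀ u v c, D.col u v = some c → (g u v).isSome := by
    intro u v c h0
    simp only [hgDef, h0, Option.bind_some]
    by_cases h1 : c = 0 ∧ φ u ≠ φ v
    · rw [if_pos h1]
      by_cases h2 : (G'.col (φ u) (φ v)).isSome
      · rw [if_pos h2]; exact h2
      · rw [if_neg h2]; rfl
    · rw [if_neg h1]; rfl
  have hmain : ∀ u v c, g u v = some c →
      (φ u ≠ φ v → G'.col (φ u) (φ v) = some c) ∧ (φ u = φ v → c = 0) := by
    intro u v c hc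
    cases hDuv : D.col u v with
    | none => rw [hg_none u v hDuv] at hc; simp at hc
    | some c₀ =>
      have hInv' := hInv u v c₀ hDuv
      simp only [hgDef, hDuv, Option.bind_some] at hc
      by_cases h1 : c₀ = 0 ∧ φ u ≠ φ v
      · rw [if_pos h1] at hc
        have hsome : (G'.col (φ u) (φ v)).isSome := by
          rcases hInv' with ⟨he, _⟩ | ⟨_, hcs | ⟨_, hs⟩⟩
          · exact absurd he h1.2
          · rw [hcs]; rfl
          · exact hs
        rw [if_pos hsome] at hc
        exact ⟨fun _ => hc, fun he => absurd he h1.2⟩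
      · rw [if_neg h1] at hc
        have hcc : c = c₀ := (Option.some_injective _ hc).symm
        subst hcc
        rcases hInv' with ⟨he, h0⟩ | ⟨hne, hcs | ⟨h0, _⟩⟩
        · exact ⟨fun hn => absurd he hn, fun _ => h0⟩
        · exact ⟨fun _ => hcs, fun he => absurd he hne⟩
        · exact absurd ⟨h0, hne⟩ h1
  have hrec : ∀ u v, g u v = D.col u v ∨ (D.col u v = some 0 ∧ (g u v).isSome) := by
    intro u v
    cases hDuv : D.col u v with
    | none => left; exact hg_none u v hDuv
    | some c =>
      by_cases h1 : c = 0 ∧ φ u ≠ φ v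
      · right
        refine ⟨by rw [h1.1], hg_some u v c hDuv⟩
      · left
        simp only [hgDef, hDuv, Option.bind_some]
        rw [if_neg h1]
  have hirr : ∀ v, g v v = none := fun v => hg_none v v (D.irrefl v)
  have hasym : ∀ u v, (g u v).isSome → g v u = none := by
    intro u v hs
    have hDuv : (D.col u v).isSome := by
      by_contra hcon
      rw [hg_none u v (Option.not_isSome_iff_eq_none.mp hcon)] at hs
      simp at hs
    exact hg_none v u (D.asym u v hDuv)
  exact ⟨D, ⟨g, hirr, hasym⟩, hD, hrec, hmain⟩
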